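/- For complex numbers p, q, z with |p| < 1, |q| < 1, z ≠ 0, one has Γ_{p²,q²}(z²) = Γ_{p,q}(z) · Γ_{p,q}(−z). -/

import Mathlib

/-- The elliptic Gamma function
`Γ_{p,q}(z) = ∏_{i,j ≥ 0} (1 - p^{i+1} q^{j+1}/z)/(1 - p^i q^j z)`. -/
noncomputable def ellGamma (p q z : ℂ) : ℂ :=
  ∏' ij : ℕ × ℕ,
    ((1 - p ^ (ij.1 + 1) * q ^ (ij.2 + 1) / z) / (1 - p ^ ij.1 * q ^ ij.2 * z))

/-- A function with a zero value has product zero. -/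
lemma hasProd_zero_of_exists_eq_zero' {β : Type*} {f : β → ℂ} {b : β} (hb : f b = 0) :
    HasProd f 0 := by
  have h : (fun s : Finset β => ∏ i ∈ s, f i) =ᶠ[Filter.atTop] fun _ => (0 : ℂ) := by
    refine Filter.eventually_atTop.2 ⟨{b}, fun s hs => ?_⟩
    exact Finset.prod_eq_zero (Finset.singleton_subset_iff.mp hs) hb
  exact tendsto_const_nhds.congr' h.symm

lemma summable_aux {p q : ℂ} (hp : ‖p‖ < 1) (hq : ‖q‖ < 1) (c : ℂ) :
    Summable fun ij : ℕ × ℕ => ‖p ^ ij.1 * q ^ ij.2 * c‖ := by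
  have h : Summable fun ij : ℕ × ℕ => (‖p‖ ^ ij.1) * (‖q‖ ^ ij.2) :=
    (summable_geometric_of_lt_one (norm_nonneg p) hp).mul_of_nonneg
      (summable_geometric_of_lt_one (norm_nonneg q) hq)
      (fun i => pow_nonneg (norm_nonneg p) i) (fun j => pow_nonneg (norm_nonneg q) j)
  have := h.mul_right ‖c‖
  refine this.congr fun ij => ?_
  simp [norm_mul, norm_pow, mul_assoc]

/-- Multipliability of the elliptic Gamma term family. -/
lemma ellGamma_term_multipliable (p q z : ℂ) (hp : ‖p‖ < 1) (hq : ‖q‖ < 1) (hz : z ≠ 0) :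
    Multipliable fun ij : ℕ × ℕ =>
      (1 - p ^ (ij.1 + 1) * q ^ (ij.2 + 1) / z) / (1 - p ^ ij.1 * q ^ ij.2 * z) := by
  set f : ℕ × ℕ → ℂ := fun ij =>
    (1 - p ^ (ij.1 + 1) * q ^ (ij.2 + 1) / z) / (1 - p ^ ij.1 * q ^ ij.2 * z) with hf
  by_cases h0 : ∃ ij, f ij = 0
  · obtain ⟨ij, hij⟩ := h0
    exact ⟨0, hasProd_zero_of_exists_eq_zero' hij⟩
  push_neg at h0
  -- denominators are nonzero
  have hden : ∀ ij : ℕ × ℕ, (1 : ℂ) - p ^ ij.1 * q ^ ij.2 * z ≠ 0 := by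
    intro ij hd
    exact h0 ij (by rw [hf]; simp [hd])
  -- summability of the two building blocks
  have hA : Summable fun ij : ℕ × ℕ => ‖p ^ (ij.1 + 1) * q ^ (ij.2 + 1) / z‖ := by
    have := summable_aux hp hq (p * q / z)
    refine this.congr fun ij => ?_
    congr 1
    rw [pow_succ, pow_succ]
    ring
  have hB : Summable fun ij : ℕ × ℕ => ‖p ^ ij.1 * q ^ ij.2 * z‖ := summable_aux hp hq z
  -- eventual smallness
  have hAs : ∀ᶠ ij : ℕ × ℕ in Filter.cofinite, ‖p ^ (ij.1 + 1) * q ^ (ij.2 + 1) / z‖ < 1/8 :=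
    hA.tendsto_cofinite_zero.eventually_lt_const (by norm_num)
  have hBs : ∀ᶠ ij : ℕ × ℕ in Filter.cofinite, ‖p ^ ij.1 * q ^ ij.2 * z‖ < 1/8 :=
    hB.tendsto_cofinite_zero.eventually_lt_const (by norm_num)
  -- summability of logs
  have hlog : Summable fun ij : ℕ × ℕ => Complex.log (f ij) := by
    refine Summable.of_norm_bounded_eventually
      (g := fun ij : ℕ × ℕ => 2 * (‖p ^ (ij.1 + 1) * q ^ (ij.2 + 1) / z‖ + ‖p ^ ij.1 * q ^ ij.2 * z‖))
      ((hA.add hB).mul_left 2) ?_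
    filter_upwards [hAs, hBs] with ij hAij hBij
    set A := p ^ (ij.1 + 1) * q ^ (ij.2 + 1) / z
    set B := p ^ ij.1 * q ^ ij.2 * z
    set w : ℂ := (B - A) / (1 - B) with hw
    have hB1 : (1 : ℂ) - B ≠ 0 := hden ij
    have key : ∀ a b : ℂ, 1 - b ≠ 0 → (1 - a) / (1 - b) = 1 + (b - a) / (1 - b) := by
      intro a b hb
      field_simp
      ring
    have hfw : f ij = 1 + w := by
      rw [hw]
      exact key A B hB1
    have hnB : (7:ℝ)/8 ≤ ‖(1:ℂ) - B‖ := by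
      have := norm_sub_norm_le (1 : ℂ) B
      rw [norm_one] at this
      linarith [hBij.le]
    have hwle : ‖w‖ ≤ (8/7) * (‖A‖ + ‖B‖) := by
      rw [hw, norm_div]
      rw [div_le_iff₀ (by linarith : (0:ℝ) < ‖(1:ℂ) - B‖)]
      calc ‖B - A‖ ≤ ‖B‖ + ‖A‖ := norm_sub_le _ _
        _ = (8/7) * (‖A‖ + ‖B‖) * (7/8) := by ring
        _ ≤ (8/7) * (‖A‖ + ‖B‖) * ‖(1:ℂ) - B‖ := by
            apply mul_le_mul_of_nonneg_left hnB
            positivity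
    have hwhalf : ‖w‖ ≤ 1/2 := by
      calc ‖w‖ ≤ (8/7) * (‖A‖ + ‖B‖) := hwle
        _ ≤ (8/7) * (1/8 + 1/8) := by
            apply mul_le_mul_of_nonneg_left (by linarith [hAij.le, hBij.le]) (by norm_num)
        _ ≤ 1/2 := by norm_num
    calc ‖Complex.log (f ij)‖ = ‖Complex.log (1 + w)‖ := by rw [hfw]
      _ ≤ (3/2) * ‖w‖ := Complex.norm_log_one_add_half_le_self hwhalf
      _ ≤ (3/2) * ((8/7) * (‖A‖ + ‖B‖)) := by
          apply mul_le_mul_of_nonneg_left hwle (by norm_num)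
      _ ≤ 2 * (‖A‖ + ‖B‖) := by
          nlinarith [norm_nonneg A, norm_nonneg B]
  refine ⟨Complex.exp (∑' ij, Complex.log (f ij)), ?_⟩
  have hcomp : Complex.exp ∘ (fun ij => Complex.log (f ij)) = f :=
    funext fun ij => Complex.exp_log (h0 ij)
  have h := hlog.hasSum.cexp
  rw [hcomp] at h
  exact h

/-- The quadratic functional equation `Γ_{p²,q²}(z²) = Γ_{p,q}(z) Γ_{p,q}(−z)`. -/
theorem ellGamma_quadratic_sq (p q z : ℂ) (hp : ‖p‖ < 1) (hq : ‖q‖ < 1) (hz : z ≠ 0) :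
    ellGamma (p ^ 2) (q ^ 2) (z ^ 2) = ellGamma p q z * ellGamma p q (-z) := by
  have hf := ellGamma_term_multipliable p q z hp hq hz
  have hg := ellGamma_term_multipliable p q (-z) hp hq (neg_ne_zero.mpr hz)
  unfold ellGamma
  rw [← hf.tprod_mul hg]
  refine tprod_congr fun ij => ?_
  have hnum : (1 : ℂ) - (p ^ 2) ^ (ij.1 + 1) * (q ^ 2) ^ (ij.2 + 1) / z ^ 2 =
      (1 - p ^ (ij.1 + 1) * q ^ (ij.2 + 1) / z) *
        (1 - p ^ (ij.1 + 1) * q ^ (ij.2 + 1) / (-z)) := by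
    rw [div_neg]
    have e1 : (p ^ 2) ^ (ij.1 + 1) * (q ^ 2) ^ (ij.2 + 1) / z ^ 2 =
        (p ^ (ij.1 + 1) * q ^ (ij.2 + 1) / z) ^ 2 := by
      rw [div_pow, mul_pow]; ring
    rw [e1]; ring
  have hden : (1 : ℂ) - (p ^ 2) ^ ij.1 * (q ^ 2) ^ ij.2 * z ^ 2 =
      (1 - p ^ ij.1 * q ^ ij.2 * z) * (1 - p ^ ij.1 * q ^ ij.2 * (-z)) := by
    ring
  rw [hnum, hden, div_mul_div_comm]
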